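/- (Proposition 2, sampled-data CBF with higher relative degree.) Let x be a closed-loop trajectory of the sampled-data control-affine system, where h has relative degree r and s_k(x(0)) ≥ 0 for every k = 0, …, r−1. Suppose that for each k ∈ ℕ there exist a set S_k ⊆ ℝⁿ (an over-approximation of the reachable tube over the sampling interval) and a real margin φ_k such that: (i) x(t) ∈ S_k for all t ∈ [t_k, t_{k+1}]; (ii) ξ(x′, u) − ξ(x_k, u) ≥ φ_k for every x′ ∈ S_k and every u ∈ U; and (iii) the applied input satisfies u_k ∈ U and the sampled-data CBF condition ξ(x_k, u_k) + φ_k ≥ 0, i.e. L_f^r h(x_k) + L_g L_f^{r−1} h(x_k) u_k + aᵀη(x_k) + φ_k ≥ 0. Then h(x(t)) ≥ 0 for all t ≥ 0. -/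

import Mathlib

open Set Filter

noncomputable section

/-- `ℝⁿ` as a Euclidean space. -/
abbrev E (n : ℕ) : Type := EuclideanSpace ℝ (Fin n)

/-- Iterated Lie derivative along `f`: `L_f^0 h = h`, `L_f^{k+1} h (x) = ∇(L_f^k h)(x)·f(x)`. -/
noncomputable def lieIter {n : ℕ} (f : E n → E n) (h : E n → ℝ) : ℕ → E n → ℝ
  | 0 => h
  | k + 1 => fun p => fderiv ℝ (lieIter f h k) p (f p)

/-- The cascaded functions `s_0 = h`, `s_k = L_f s_{k-1} + λ_k s_{k-1}` (using `lam k` as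
`λ_k`). -/
noncomputable def cascade {n : ℕ} (f : E n → E n) (h : E n → ℝ) (lam : ℕ → ℝ) :
    ℕ → E n → ℝ
  | 0 => h
  | k + 1 => fun p =>
      fderiv ℝ (cascade f h lam k) p (f p) + lam (k + 1) * cascade f h lam k p

/-- `esym lam k j` is the `j`-th elementary symmetric polynomial `e_j(λ_1, …, λ_k)`
(so `esym lam k 0 = 1`). -/
noncomputable def esym (lam : ℕ → ℝ) (k j : ℕ) : ℝ :=
  ∑ S ∈ (Finset.Icc 1 k).powersetCard j, ∏ i ∈ S, lam i

/-- The higher-order CBF expression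
`ξ(x,u) = L_f^r h(x) + L_g L_f^{r-1} h(x) u + aᵀη(x)`, where `a_i = e_i(λ_1, …, λ_r)` and
`aᵀη(x) = Σ_{i=0}^{r-1} e_{r-i}(λ_1, …, λ_r) · L_f^i h(x)`. -/
noncomputable def xiR {n m : ℕ} (f : E n → E n) (g : E n → E m →L[ℝ] E n)
    (h : E n → ℝ) (lam : ℕ → ℝ) (r : ℕ) (p : E n) (v : E m) : ℝ :=
  lieIter f h r p + fderiv ℝ (lieIter f h (r - 1)) p (g p v)
    + ∑ i ∈ Finset.range r, esym lam r (r - i) * lieIter f h i p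

lemma esym_zero (lam : ℕ → ℝ) (k : ℕ) : esym lam k 0 = 1 := by
  simp [esym]

lemma esym_eq_zero (lam : ℕ → ℝ) {k j : ℕ} (hj : k < j) : esym lam k j = 0 := by
  have : (Finset.Icc 1 k).powersetCard j = ∅ := by
    rw [Finset.powersetCard_eq_empty]
    simpa [Nat.card_Icc] using hj
  simp [esym, this]

lemma esym_succ (lam : ℕ → ℝ) (k j : ℕ) :
    esym lam (k + 1) (j + 1) = esym lam k (j + 1) + lam (k + 1) * esym lam k j := by
  classical
  have hx : (k + 1) ∉ Finset.Icc 1 k := by simp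
  have hIcc : Finset.Icc 1 (k + 1) = insert (k + 1) (Finset.Icc 1 k) :=
    (Finset.insert_Icc_right_eq_Icc_add_one (by omega)).symm
  unfold esym
  rw [hIcc, Finset.powersetCard_succ_insert hx]
  have hdisj : Disjoint ((Finset.Icc 1 k).powersetCard (j + 1))
      (((Finset.Icc 1 k).powersetCard j).image (insert (k + 1))) := by
    rw [Finset.disjoint_left]
    rintro A hA hA'
    simp only [Finset.mem_image] at hA'
    obtain ⟨B, _, rfl⟩ := hA'
    have : (k + 1) ∈ insert (k + 1) B := Finset.mem_insert_self _ _
    have hsub := Finset.mem_powersetCard.mp hA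
    exact hx (hsub.1 this)
  rw [Finset.sum_union hdisj]
  congr 1
  rw [Finset.sum_image ?hinj]
  · rw [Finset.mul_sum]
    refine Finset.sum_congr rfl fun B hB => ?_
    have hBk : (k + 1) ∉ B := fun hmem =>
      hx ((Finset.mem_powersetCard.mp hB).1 hmem)
    rw [Finset.prod_insert hBk]
  · case hinj =>
    intro A hA B hB hAB
    have hAk : (k + 1) ∉ A := fun hmem => hx ((Finset.mem_powersetCard.mp hA).1 hmem)
    have hBk : (k + 1) ∉ B := fun hmem => hx ((Finset.mem_powersetCard.mp hB).1 hmem)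
    have := congrArg (fun s => Finset.erase s (k + 1)) hAB
    simpa [Finset.erase_insert, hAk, hBk] using this

lemma lieIter_contDiff {n : ℕ} {r : ℕ} {f : E n → E n} {h : E n → ℝ}
    (hf : ContDiff ℝ (r - 1 : ℕ) f) (hh : ContDiff ℝ (r : ℕ) h) :
    ∀ k, k ≤ r → ContDiff ℝ ((r - k : ℕ) : ℕ∞) (lieIter f h k) := by
  intro k
  induction k with
  | zero => intro _; simpa [lieIter] using hh
  | succ k ih =>
    intro hk
    have hk' : k ≤ r := by omega
    have IH := ih hk'
    have hm : r - k = (r - (k + 1)) + 1 := by omega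
    rw [hm] at IH
    have hD : ContDiff ℝ ((r - (k + 1) : ℕ) : ℕ∞) (fderiv ℝ (lieIter f h k)) :=
      IH.fderiv_right (by exact_mod_cast le_refl ((r - (k + 1)) + 1 : ℕ))
    have hfm : ContDiff ℝ ((r - (k + 1) : ℕ) : ℕ∞) f :=
      hf.of_le (Nat.cast_le.mpr (by omega))
    exact hD.clm_apply hfm

lemma lieIter_diff {n : ℕ} {r : ℕ} {f : E n → E n} {h : E n → ℝ}
    (hf : ContDiff ℝ (r - 1 : ℕ) f) (hh : ContDiff ℝ (r : ℕ) h)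
    {k : ℕ} (hk : k < r) : Differentiable ℝ (lieIter f h k) := by
  have := lieIter_contDiff hf hh k hk.le
  exact this.differentiable (by exact_mod_cast (show r - k ≠ 0 by omega))

lemma sum_fderiv_apply {n K : ℕ} (F : ℕ → E n → ℝ) (c : ℕ → ℝ)
    (hdiff : ∀ i ∈ Finset.range K, Differentiable ℝ (F i)) (p : E n) (w : E n) :
    fderiv ℝ (fun q => ∑ i ∈ Finset.range K, c i * F i q) p w
      = ∑ i ∈ Finset.range K, c i * fderiv ℝ (F i) p w := by
  have H : HasFDerivAt (fun q => ∑ i ∈ Finset.range K, c i * F i q)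
      (∑ i ∈ Finset.range K, c i • fderiv ℝ (F i) p) p :=
    HasFDerivAt.fun_sum fun i hi => ((hdiff i hi p).hasFDerivAt).const_mul (c i)
  rw [H.fderiv]
  simp [ContinuousLinearMap.sum_apply]

lemma cascade_eq {n : ℕ} {r : ℕ} {f : E n → E n} {h : E n → ℝ} (lam : ℕ → ℝ)
    (hf : ContDiff ℝ (r - 1 : ℕ) f) (hh : ContDiff ℝ (r : ℕ) h) :
    ∀ k, k ≤ r → cascade f h lam k =
      fun p => ∑ i ∈ Finset.range (k + 1), esym lam k (k - i) * lieIter f h i p := by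
  intro k
  induction k with
  | zero => intro _; funext p; simp [cascade, esym_zero, lieIter]
  | succ k ih =>
    intro hk
    have hk' : k ≤ r := by omega
    funext p
    show fderiv ℝ (cascade f h lam k) p (f p) + lam (k + 1) * cascade f h lam k p = _
    rw [ih hk']
    rw [sum_fderiv_apply (lieIter f h) (fun i => esym lam k (k - i))
      (fun i hi => lieIter_diff hf hh (by simp at hi; omega)) p (f p)]
    have hfd : ∀ i, fderiv ℝ (lieIter f h i) p (f p) = lieIter f h (i + 1) p :=
      fun i => rfl
    simp only [hfd]
    -- A + lam (k+1) * B = T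
    have hA : (∑ i ∈ Finset.range (k + 1), esym lam k (k - i) * lieIter f h (i + 1) p)
        = ∑ j ∈ Finset.range (k + 1), esym lam k (k + 1 - j) * lieIter f h j p
          + esym lam k 0 * lieIter f h (k + 1) p := by
      have h1 : (∑ j ∈ Finset.range (k + 2), esym lam k (k + 1 - j) * lieIter f h j p)
          = (∑ i ∈ Finset.range (k + 1), esym lam k (k + 1 - (i + 1)) * lieIter f h (i + 1) p)
            + esym lam k (k + 1 - 0) * lieIter f h 0 p := Finset.sum_range_succ' _ _
      have h2 : (∑ j ∈ Finset.range (k + 2), esym lam k (k + 1 - j) * lieIter f h j p)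
          = (∑ j ∈ Finset.range (k + 1), esym lam k (k + 1 - j) * lieIter f h j p)
            + esym lam k (k + 1 - (k + 1)) * lieIter f h (k + 1) p := Finset.sum_range_succ _ _
      have h3 : esym lam k (k + 1 - 0) = 0 := esym_eq_zero lam (by omega)
      have h4 : ∀ i : ℕ, k + 1 - (i + 1) = k - i := fun i => by omega
      simp only [h4] at h1
      rw [h3, zero_mul, add_zero] at h1
      rw [← h1, h2]
      norm_num
    rw [hA]
    have hT : (∑ i ∈ Finset.range (k + 1 + 1), esym lam (k + 1) (k + 1 - i) * lieIter f h i p)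
        = (∑ j ∈ Finset.range (k + 1), esym lam (k + 1) (k + 1 - j) * lieIter f h j p)
          + esym lam (k + 1) 0 * lieIter f h (k + 1) p := by
      rw [Finset.sum_range_succ]; norm_num
    rw [hT, esym_zero, esym_zero, add_right_comm]
    congr 1
    rw [Finset.mul_sum, ← Finset.sum_add_distrib]
    refine Finset.sum_congr rfl fun j hj => ?_
    have hj' : j < k + 1 := Finset.mem_range.mp hj
    have e1 : k + 1 - j = (k - j) + 1 := by omega
    rw [e1, esym_succ, ← e1]
    ring

lemma cascade_diff {n : ℕ} {r : ℕ} {f : E n → E n} {h : E n → ℝ} (lam : ℕ → ℝ)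
    (hf : ContDiff ℝ (r - 1 : ℕ) f) (hh : ContDiff ℝ (r : ℕ) h)
    {k : ℕ} (hk : k < r) : Differentiable ℝ (cascade f h lam k) := by
  rw [cascade_eq lam hf hh k hk.le]
  exact Differentiable.fun_sum fun i hi =>
    (lieIter_diff hf hh (by simp at hi; omega)).const_mul _

lemma cascade_fderiv_g {n m : ℕ} {r : ℕ} {f : E n → E n} {h : E n → ℝ}
    {g : E n → E m →L[ℝ] E n} (lam : ℕ → ℝ)
    (hf : ContDiff ℝ (r - 1 : ℕ) f) (hh : ContDiff ℝ (r : ℕ) h)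
    (hreldeg : ∀ k, k + 2 ≤ r → ∀ p : E n, ∀ v : E m,
      fderiv ℝ (lieIter f h k) p (g p v) = 0)
    {k : ℕ} (hk : k < r) (p : E n) (v : E m) :
    fderiv ℝ (cascade f h lam k) p (g p v)
      = (if k + 1 = r then fderiv ℝ (lieIter f h (r - 1)) p (g p v) else 0) := by
  rw [cascade_eq lam hf hh k hk.le]
  rw [sum_fderiv_apply (lieIter f h) (fun i => esym lam k (k - i))
    (fun i hi => lieIter_diff hf hh (by simp at hi; omega)) p (g p v)]
  by_cases hkr : k + 1 = r
  · rw [if_pos hkr]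
    rw [Finset.sum_range_succ]
    have hz : ∀ i ∈ Finset.range k, esym lam k (k - i) * fderiv ℝ (lieIter f h i) p (g p v) = 0 := by
      intro i hi
      rw [hreldeg i (by simp at hi; omega) p v, mul_zero]
    rw [Finset.sum_eq_zero hz, zero_add]
    have : k = r - 1 := by omega
    subst this
    simp [esym_zero]
  · rw [if_neg hkr]
    refine Finset.sum_eq_zero fun i hi => ?_
    rw [hreldeg i (by simp at hi; omega) p v, mul_zero]

lemma xiR_eq {n m : ℕ} {r : ℕ} {f : E n → E n} {h : E n → ℝ}
    {g : E n → E m →L[ℝ] E n} (lam : ℕ → ℝ)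
    (hf : ContDiff ℝ (r - 1 : ℕ) f) (hh : ContDiff ℝ (r : ℕ) h)
    (p : E n) (v : E m) :
    xiR f g h lam r p v = cascade f h lam r p + fderiv ℝ (lieIter f h (r - 1)) p (g p v) := by
  rw [cascade_eq lam hf hh r le_rfl]
  simp only [xiR]
  rw [Finset.sum_range_succ, Nat.sub_self, esym_zero]
  ring

lemma comparison (t : ℕ → ℝ) (ht0 : t 0 = 0) (htmono : StrictMono t)
    (httop : Tendsto t atTop atTop)
    (y : ℝ → ℝ) (hyc : ContinuousOn y (Ici 0)) (hy0 : 0 ≤ y 0) (c : ℝ)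
    (hder : ∀ k, ∀ s ∈ Ioo (t k) (t (k + 1)), ∃ d, HasDerivAt y d s ∧ 0 ≤ d + c * y s) :
    ∀ s, 0 ≤ s → 0 ≤ y s := by
  set z : ℝ → ℝ := fun s => Real.exp (c * s) * y s with hz
  have htk : ∀ k, (0 : ℝ) ≤ t k := fun k => ht0 ▸ htmono.monotone (Nat.zero_le k)
  have hzc : ContinuousOn z (Ici 0) :=
    ((Real.continuous_exp.comp (continuous_const.mul continuous_id)).continuousOn).mul hyc
  have hzder : ∀ k, ∀ s ∈ Ioo (t k) (t (k + 1)), ∃ d, HasDerivAt z d s ∧ 0 ≤ d := by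
    intro k s hs
    obtain ⟨d, hd, hd0⟩ := hder k s hs
    have he : HasDerivAt (fun s => Real.exp (c * s)) (Real.exp (c * s) * c) s :=
      (Real.hasDerivAt_exp (c * s)).comp s (by simpa using (hasDerivAt_id s).const_mul c)
    refine ⟨_, he.mul hd, ?_⟩
    have := Real.exp_pos (c * s)
    nlinarith
  have hmono : ∀ k, MonotoneOn z (Icc (t k) (t (k + 1))) := by
    intro k
    have hIcc : Icc (t k) (t (k + 1)) ⊆ Ici (0 : ℝ) :=
      (Icc_subset_Ici_self).trans (Ici_subset_Ici.mpr (htk k))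
    refine monotoneOn_of_deriv_nonneg (convex_Icc _ _) (hzc.mono hIcc) ?_ ?_
    · rw [interior_Icc]
      intro s hs
      obtain ⟨d, hd, _⟩ := hzder k s hs
      exact hd.differentiableAt.differentiableWithinAt
    · rw [interior_Icc]
      intro s hs
      obtain ⟨d, hd, hd0⟩ := hzder k s hs
      rw [hd.deriv]; exact hd0
  have hzk : ∀ k, 0 ≤ z (t k) := by
    intro k
    induction k with
    | zero => simpa [hz, ht0] using hy0
    | succ k ih =>
      have hlt : t k < t (k + 1) := htmono (Nat.lt_succ_self k)
      exact ih.trans (hmono k ⟨le_rfl, hlt.le⟩ ⟨hlt.le, le_rfl⟩ hlt.le)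
  intro s hs
  have hex : ∃ j, s < t j := (httop.eventually (eventually_gt_atTop s)).exists
  have hzs : 0 ≤ z s := by
    cases hj0 : Nat.find hex with
    | zero =>
      have := Nat.find_spec hex
      rw [hj0, ht0] at this; linarith
    | succ k =>
      have h1 : s < t (k + 1) := hj0 ▸ Nat.find_spec hex
      have h2 : t k ≤ s := le_of_not_gt (Nat.find_min hex (by omega))
      exact (hzk k).trans (hmono k ⟨le_rfl, (h2.trans h1.le)⟩ ⟨h2, h1.le⟩ h2)
  have hzs' : 0 ≤ Real.exp (c * s) * y s := hzs
  have := Real.exp_pos (c * s)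
  nlinarith

/-- Proposition 2 (sampled-data CBF with higher relative degree): if `s_k(x(0)) ≥ 0` for
`k = 0, …, r-1`, on each sampling interval the trajectory stays in a set `S k` over which
`ξ(·,u) - ξ(x_k,u)` is bounded below by a margin `φ k` uniformly in `u ∈ U`, and the
applied input satisfies the sampled-data CBF condition `ξ(x_k, u_k) + φ k ≥ 0`, then
`h(x(t)) ≥ 0` for all `t ≥ 0`. -/
theorem stmt_8 {n m : ℕ} (r : ℕ) (hr : 2 ≤ r)
    (f : E n → E n) (hfl : LocallyLipschitz f) (hf : ContDiff ℝ (r - 1 : ℕ) f)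
    (g : E n → E m →L[ℝ] E n) (hgl : LocallyLipschitz g)
    (U : Set (E m))
    (h : E n → ℝ) (hh : ContDiff ℝ (r : ℕ) h)
    (lam : ℕ → ℝ) (hlam : ∀ i, 1 ≤ i → i ≤ r → 0 < lam i)
    (hreldeg : ∀ k, k + 2 ≤ r → ∀ p : E n, ∀ v : E m,
      fderiv ℝ (lieIter f h k) p (g p v) = 0)
    (t : ℕ → ℝ) (ht0 : t 0 = 0) (htmono : StrictMono t)
    (httop : Tendsto t atTop atTop)
    (u : ℕ → E m)
    (x : ℝ → E n) (hxc : ContinuousOn x (Ici (0 : ℝ)))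
    (hode : ∀ k, ∀ s ∈ Ioo (t k) (t (k + 1)),
      HasDerivAt x (f (x s) + g (x s) (u k)) s)
    (hinit : ∀ k < r, 0 ≤ cascade f h lam k (x 0))
    (S : ℕ → Set (E n)) (φ : ℕ → ℝ)
    (hreach : ∀ k, ∀ s ∈ Icc (t k) (t (k + 1)), x s ∈ S k)
    (hmargin : ∀ k, ∀ x' ∈ S k, ∀ v ∈ U,
      φ k ≤ xiR f g h lam r x' v - xiR f g h lam r (x (t k)) v)
    (huU : ∀ k, u k ∈ U)
    (hcbf : ∀ k, 0 ≤ xiR f g h lam r (x (t k)) (u k) + φ k) :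
    ∀ s, 0 ≤ s → 0 ≤ h (x s) := by
  have htk : ∀ k, (0 : ℝ) ≤ t k := fun k => ht0 ▸ htmono.monotone (Nat.zero_le k)
  have hDer : ∀ k, k < r → ∀ j, ∀ s ∈ Ioo (t j) (t (j + 1)),
      HasDerivAt (fun s => cascade f h lam k (x s))
        (cascade f h lam (k + 1) (x s) - lam (k + 1) * cascade f h lam k (x s)
          + fderiv ℝ (cascade f h lam k) (x s) (g (x s) (u j))) s := by
    intro k hk j s hs
    have hx := hode j s hs
    have hcd := (cascade_diff lam hf hh hk (x s)).hasFDerivAt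
    have H := hcd.comp_hasDerivAt s hx
    refine H.congr_deriv ?_
    have hc : cascade f h lam (k + 1) (x s)
        = fderiv ℝ (cascade f h lam k) (x s) (f (x s))
          + lam (k + 1) * cascade f h lam k (x s) := rfl
    rw [hc, map_add]
    ring
  have Ptop : ∀ s, 0 ≤ s → 0 ≤ cascade f h lam (r - 1) (x s) := by
    refine comparison t ht0 htmono httop _
      ((cascade_diff lam hf hh (by omega)).continuous.comp_continuousOn hxc)
      (hinit (r - 1) (by omega)) (lam r) ?_
    intro k s hs
    refine ⟨_, hDer (r - 1) (by omega) k s hs, ?_⟩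
    have hg := cascade_fderiv_g lam hf hh hreldeg (k := r - 1) (by omega) (x s) (u k)
    rw [if_pos (by omega)] at hg
    have hrr : r - 1 + 1 = r := by omega
    have hxi1 := xiR_eq (g := g) lam hf hh (x s) (u k)
    have hmar := hmargin k (x s) (hreach k s (Ioo_subset_Icc_self hs)) (u k) (huU k)
    have hc := hcbf k
    rw [hrr, hg]
    linarith
  have main : ∀ i, i ≤ r - 1 → ∀ s, 0 ≤ s → 0 ≤ cascade f h lam (r - 1 - i) (x s) := by
    intro i
    induction i with
    | zero => intro _; simpa using Ptop
    | succ i ih =>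
      intro hi
      have hi' : i ≤ r - 1 := by omega
      have hk1 : (r - 1 - (i + 1)) + 1 = r - 1 - i := by omega
      refine comparison t ht0 htmono httop _
        ((cascade_diff lam hf hh (by omega)).continuous.comp_continuousOn hxc)
        (hinit (r - 1 - (i + 1)) (by omega)) (lam ((r - 1 - (i + 1)) + 1)) ?_
      intro j σ hσ
      refine ⟨_, hDer (r - 1 - (i + 1)) (by omega) j σ hσ, ?_⟩
      have hg := cascade_fderiv_g lam hf hh hreldeg (k := r - 1 - (i + 1)) (by omega) (x σ) (u j)
      rw [if_neg (by omega)] at hg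
      rw [hg, hk1]
      have hσ0 : 0 ≤ σ := (htk j).trans hσ.1.le
      have := ih hi' σ hσ0
      linarith
  intro s hs
  have := main (r - 1) le_rfl s hs
  simpa [Nat.sub_self, cascade] using this
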